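/- Let G be a group, H and M subgroups of G, T a subgroup of H, and γ ∈ G an element with γ^{-1} T γ ⊆ M. Set 𝓜 := (γ M γ^{-1}) ∩ H. Let N_H(T) = {h ∈ H : h T h^{-1} = T} and N_𝓜(T) = {m ∈ 𝓜 : m T m^{-1} = T}. Then for h, h' ∈ N_H(T) one has h γ M = h' γ M (equality of left cosets of M in G) if and only if h'^{-1} h ∈ N_𝓜(T). Consequently, if the index [N_H(T) : N_𝓜(T)] is finite, the image of the map N_H(T) → G/M, h ↦ hγM, has cardinality [N_H(T) : N_𝓜(T)]. -/

import Mathlib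

/-- Let `G` be a group, `H, M` subgroups, `T ≤ H` a subgroup and `γ ∈ G` with
`γ⁻¹ T γ ⊆ M`.  Set `𝓜 = (γ M γ⁻¹) ⊓ H`, `N_H(T) = H ⊓ N(T)` and
`N_𝓜(T) = 𝓜 ⊓ N(T)`.  Then for `h, h' ∈ N_H(T)` one has `hγM = h'γM` iff
`h'⁻¹h ∈ N_𝓜(T)`; consequently if `[N_H(T) : N_𝓜(T)]` is finite, the image of
`N_H(T) → G/M`, `h ↦ hγM`, has cardinality `[N_H(T) : N_𝓜(T)]`. -/
theorem coset_fibers_of_normalizers {G : Type*} [Group G] (H M T : Subgroup G)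
    (hTH : T ≤ H) (γ : G) (hγ : ∀ t ∈ T, γ⁻¹ * t * γ ∈ M) :
    (∀ h h', h ∈ H ⊓ Subgroup.normalizer (T : Set G) → h' ∈ H ⊓ Subgroup.normalizer (T : Set G) →
      ((QuotientGroup.mk (h * γ) : G ⧸ M) = QuotientGroup.mk (h' * γ) ↔
        h'⁻¹ * h ∈ (M.map (MulAut.conj γ).toMonoidHom ⊓ H) ⊓ Subgroup.normalizer (T : Set G))) ∧
    ((M.map (MulAut.conj γ).toMonoidHom ⊓ H ⊓ Subgroup.normalizer (T : Set G)).relIndex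
        (H ⊓ Subgroup.normalizer (T : Set G)) ≠ 0 →
      Nat.card ((fun h => (QuotientGroup.mk (h * γ) : G ⧸ M)) ''
          ((H ⊓ Subgroup.normalizer (T : Set G) : Subgroup G) : Set G)) =
        (M.map (MulAut.conj γ).toMonoidHom ⊓ H ⊓ Subgroup.normalizer (T : Set G)).relIndex
          (H ⊓ Subgroup.normalizer (T : Set G))) := by
  set K : Subgroup G := H ⊓ Subgroup.normalizer (T : Set G) with hK
  set L : Subgroup G := M.map (MulAut.conj γ).toMonoidHom ⊓ H ⊓ Subgroup.normalizer (T : Set G) with hL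
  have memmap : ∀ x : G, x ∈ M.map (MulAut.conj γ).toMonoidHom ↔ γ⁻¹ * x * γ ∈ M := by
    intro x
    constructor
    · rintro ⟨m, hm, rfl⟩
      simpa [mul_assoc] using hm
    · intro h
      exact ⟨_, h, by simp [mul_assoc]⟩
  have key : ∀ h h', h ∈ K → h' ∈ K →
      ((QuotientGroup.mk (h * γ) : G ⧸ M) = QuotientGroup.mk (h' * γ) ↔
        h'⁻¹ * h ∈ L) := by
    intro h h' hh hh'
    rw [QuotientGroup.eq]
    constructor
    · intro hx
      refine ⟨⟨(memmap _).2 ?_, H.mul_mem (H.inv_mem hh'.1) hh.1⟩,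
        (Subgroup.normalizer (T : Set G)).mul_mem ((Subgroup.normalizer (T : Set G)).inv_mem hh'.2) hh.2⟩
      have := M.inv_mem hx
      simpa [mul_assoc] using this
    · intro hx
      have := (memmap _).1 hx.1.1
      have := M.inv_mem this
      have h2 : γ⁻¹ * (h⁻¹ * h') * γ ∈ M := by
        simpa [mul_assoc, mul_inv_rev] using this
      simpa [mul_assoc] using h2
  refine ⟨key, fun hfin => ?_⟩
  have hLK : L ≤ K := fun x hx => ⟨hx.1.2, hx.2⟩
  -- the induced map from the quotient
  let f : K ⧸ (L.subgroupOf K) → G ⧸ M :=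
    Quotient.lift (fun k : K => (QuotientGroup.mk ((k : G) * γ) : G ⧸ M))
      (by
        intro a b hab
        have hab' : a⁻¹ * b ∈ L.subgroupOf K :=
          (@QuotientGroup.leftRel_apply K _ (L.subgroupOf K) a b).1 hab
        have : (a : G)⁻¹ * b ∈ L := by
          simpa [Subgroup.mem_subgroupOf] using hab'
        exact ((key (b : G) (a : G) b.2 a.2).2 this).symm)
  have hinj : Function.Injective f := by
    intro x y
    induction x using Quotient.inductionOn with | _ a =>
    induction y using Quotient.inductionOn with | _ b =>
    intro hxy
    have : (b : G)⁻¹ * a ∈ L := (key (a : G) (b : G) a.2 b.2).1 hxy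
    refine Quotient.sound ((@QuotientGroup.leftRel_apply K _ (L.subgroupOf K) a b).2 ?_)
    rw [Subgroup.mem_subgroupOf]
    show (a : G)⁻¹ * b ∈ L
    simpa using L.inv_mem this
  have hrange : Set.range f =
      (fun h => (QuotientGroup.mk (h * γ) : G ⧸ M)) '' ((K : Subgroup G) : Set G) := by
    ext x
    constructor
    · rintro ⟨q, rfl⟩
      induction q using Quotient.inductionOn with | _ a =>
      exact ⟨a, a.2, rfl⟩
    · rintro ⟨h, hh, rfl⟩
      exact ⟨Quotient.mk _ ⟨h, hh⟩, rfl⟩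
  rw [← hrange, Nat.card_range_of_injective hinj]
  rfl
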